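/- For integers p, q ≥ 12, the (p × q) column-clique grid has mim-width at least min(p/4, q/3). -/

import Mathlib

open SimpleGraph
open scoped Classical

noncomputable section

/-- The graph `K_t ⊠ S_t`: a clique of size `t` (the `inl` part), an independent set of
size `t` (the `inr` part), joined by a perfect matching. -/
def ktst (t : ℕ) : SimpleGraph (Fin t ⊕ Fin t) :=
  SimpleGraph.fromRel (fun x y =>
    match x, y with
    | Sum.inl i, Sum.inl j => i ≠ j
    | Sum.inl i, Sum.inr j => i = j
    | _, _ => False)

/-- The graph `K_t ⊠ K_t`: two cliques of size `t` joined by a perfect matching. -/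
def ktkt (t : ℕ) : SimpleGraph (Fin t ⊕ Fin t) :=
  SimpleGraph.fromRel (fun x y =>
    match x, y with
    | Sum.inl i, Sum.inl j => i ≠ j
    | Sum.inr i, Sum.inr j => i ≠ j
    | Sum.inl i, Sum.inr j => i = j
    | _, _ => False)

/-- The cycle graph on `ZMod n`. -/
def cycleG (n : ℕ) : SimpleGraph (ZMod n) :=
  SimpleGraph.fromRel (fun x y => y = x + 1)

/-- `σ` enumerates the vertices of `G` as a co-comparability ordering. -/
def IsCoCompOrdering {V : Type} {n : ℕ} (G : SimpleGraph V) (σ : Fin n ≃ V) : Prop :=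
  ∀ i j k : Fin n, i < j → j < k → G.Adj (σ i) (σ k) →
    G.Adj (σ j) (σ i) ∨ G.Adj (σ j) (σ k)

/-- `G` contains `H` as an induced subgraph. -/
def ContainsInducedIso {V W : Type} (G : SimpleGraph V) (H : SimpleGraph W) : Prop :=
  ∃ f : W → V, Function.Injective f ∧ ∀ x y, H.Adj x y ↔ G.Adj (f x) (f y)

/-- A graph is chordal iff it has no induced cycle of length at least 4. -/
def Chordal {V : Type} (G : SimpleGraph V) : Prop :=
  ∀ n, 4 ≤ n → ¬ ContainsInducedIso G (cycleG n)

/-- `G` contains `H` as an induced minor (via an induced minor model). -/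
def HasInducedMinor {V W : Type} (G : SimpleGraph V) (H : SimpleGraph W) : Prop :=
  ∃ S : W → Set V,
    (∀ w, (G.induce (S w)).Connected) ∧
    (∀ w w', w ≠ w' → Disjoint (S w) (S w')) ∧
    (∀ w w', H.Adj w w' → ∃ a ∈ S w, ∃ b ∈ S w', G.Adj a b) ∧
    (∀ w w', w ≠ w' → ¬ H.Adj w w' → ∀ a ∈ S w, ∀ b ∈ S w', ¬ G.Adj a b)

/-- `G` contains `K_t` as a minor (branch sets). -/
def HasCliqueMinor {V : Type} (G : SimpleGraph V) (t : ℕ) : Prop :=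
  ∃ S : Fin t → Set V,
    (∀ i, (G.induce (S i)).Connected) ∧
    (∀ i j, i ≠ j → Disjoint (S i) (S j)) ∧
    (∀ i j, i ≠ j → ∃ a ∈ S i, ∃ b ∈ S j, G.Adj a b)

/-- There is an induced matching of `G` of size `m` between `A` and its complement:
the `2m` matched vertices induce exactly the `m` matching edges in `G`. -/
def IsSimMatching {V : Type} (G : SimpleGraph V) (A : Set V) (m : ℕ) : Prop :=
  ∃ a b : Fin m → V,
    Function.Injective a ∧ Function.Injective b ∧
    (∀ i, a i ∈ A) ∧ (∀ i, b i ∉ A) ∧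
    (∀ i j, G.Adj (a i) (b j) ↔ i = j) ∧
    (∀ i j, ¬ G.Adj (a i) (a j)) ∧
    (∀ i j, ¬ G.Adj (b i) (b j))

/-- There is an induced matching of size `m` in the bipartite graph `G[A, V \ A]`
of edges crossing the cut. -/
def IsMimMatching {V : Type} (G : SimpleGraph V) (A : Set V) (m : ℕ) : Prop :=
  ∃ a b : Fin m → V,
    Function.Injective a ∧ Function.Injective b ∧
    (∀ i, a i ∈ A) ∧ (∀ i, b i ∉ A) ∧
    (∀ i j, G.Adj (a i) (b j) ↔ i = j)

def simval {V : Type} (G : SimpleGraph V) (A : Set V) : ℕ :=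
  sSup {m | IsSimMatching G A m}

def mimval {V : Type} (G : SimpleGraph V) (A : Set V) : ℕ :=
  sSup {m | IsMimMatching G A m}

/-- GF(2)-rank of the `A × Aᶜ` submatrix of the adjacency matrix: the dimension of the
span of the rows of that submatrix (rows extended by zero on columns of `A`). -/
def cutrk {V : Type} [Fintype V] (G : SimpleGraph V) (A : Set V) : ℕ :=
  Module.finrank (ZMod 2) (Submodule.span (ZMod 2)
    {r : V → ZMod 2 | ∃ a ∈ A, r = fun v => if v ∉ A ∧ G.Adj a v then 1 else 0})

/-- A branch-decomposition of a graph on vertex set `V`: a finite subcubic tree together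
with an injection of `V` onto its leaves. -/
structure BranchDecomp (V : Type) [Fintype V] where
  β : Type
  finβ : Fintype β
  T : SimpleGraph β
  connected : T.Connected
  acyclic : T.IsAcyclic
  subcubic : ∀ x : β, (T.neighborSet x).ncard = 1 ∨ (T.neighborSet x).ncard = 3
  L : V → β
  inj : Function.Injective L
  leaves : ∀ x : β, (T.neighborSet x).ncard = 1 ↔ ∃ v, L v = x

/-- The side of the cut induced by the tree edge `xy`, on the side of `x`. -/
def BranchDecomp.cut {V : Type} [Fintype V] (D : BranchDecomp V) (x y : D.β) : Set V :=
  {v | (D.T.deleteEdges {s(x, y)}).Reachable (D.L v) x}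

/-- The `f`-width of a graph on vertex set `V`: minimum over branch-decompositions of the
maximum of `f` over the cuts of the decomposition. -/
def fWidth {V : Type} [Fintype V] (f : Set V → ℕ) : ℕ :=
  sInf {w | ∃ D : BranchDecomp V, ∀ x y, D.T.Adj x y → f (D.cut x y) ≤ w}

def simw {V : Type} [Fintype V] (G : SimpleGraph V) : ℕ := fWidth (simval G)
def mimw {V : Type} [Fintype V] (G : SimpleGraph V) : ℕ := fWidth (mimval G)
def rankw {V : Type} [Fintype V] (G : SimpleGraph V) : ℕ := fWidth (cutrk G)

/-- Contraction of the edge `v₁v₂`: the vertex `v₂` is removed and `v₁` plays the role of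
the contracted vertex `z`, adjacent to all former neighbors of `v₁` or `v₂`. -/
def contractE {V : Type} (G : SimpleGraph V) (v1 v2 : V) : SimpleGraph {v : V // v ≠ v2} :=
  SimpleGraph.fromRel (fun x y =>
    G.Adj x y ∨ ((x : V) = v1 ∧ G.Adj v2 y) ∨ ((y : V) = v1 ∧ G.Adj (x : V) v2))

/-- The `(p × q)` column-clique grid. -/
def ccGrid (p q : ℕ) : SimpleGraph (Fin p × Fin q) :=
  SimpleGraph.fromRel (fun u v =>
    (u.2 = v.2) ∨ (u.1 = v.1 ∧ ((u.2 : ℕ) + 1 = v.2 ∨ (v.2 : ℕ) + 1 = u.2)))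

/-- The `(p × q)` Hsu-clique chain graph. -/
def hsu (p q : ℕ) : SimpleGraph (Fin p × Fin q) :=
  SimpleGraph.fromRel (fun u v =>
    (u.2 = v.2) ∨ ((u.2 : ℕ) + 1 = v.2 ∧ u.1 ≤ v.1))

/-- The `(k × k)` grid graph. -/
def gridG (k : ℕ) : SimpleGraph (Fin k × Fin k) :=
  SimpleGraph.fromRel (fun u v =>
    (u.1 = v.1 ∧ (u.2 : ℕ) + 1 = v.2) ∨ (u.2 = v.2 ∧ (u.1 : ℕ) + 1 = v.1))

/-- A tree-decomposition of `G`. -/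
structure TreeDecomp (V : Type) (G : SimpleGraph V) where
  β : Type
  finβ : Fintype β
  T : SimpleGraph β
  connected : T.Connected
  acyclic : T.IsAcyclic
  B : β → Set V
  coverV : ∀ v : V, ∃ t, v ∈ B t
  coverE : ∀ u v, G.Adj u v → ∃ t, u ∈ B t ∧ v ∈ B t
  coherent : ∀ v : V, (T.induce {t | v ∈ B t}).Connected

/-- Tree-width. -/
def tw {V : Type} (G : SimpleGraph V) : ℕ :=
  sInf {k | ∃ D : TreeDecomp V G, ∀ t, (D.B t).ncard ≤ k + 1}

/-- `G` is `d`-degenerate: every (induced) subgraph has a vertex of degree at most `d`. -/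
def Degenerate {V : Type} (G : SimpleGraph V) (d : ℕ) : Prop :=
  ∀ S : Set V, S.Nonempty → ∃ v ∈ S, {u ∈ S | G.Adj v u}.ncard ≤ d

/-- Every graph on `N` vertices contains a clique of size `k` or an independent set of
size `l`. -/
def ramseyProp (N k l : ℕ) : Prop :=
  ∀ G : SimpleGraph (Fin N),
    (∃ s : Finset (Fin N), G.IsNClique k s) ∨ (∃ s : Finset (Fin N), Gᶜ.IsNClique l s)

/-- The Ramsey number `R(k, l)`. -/
def ramsey (k l : ℕ) : ℕ := sInf {N | ramseyProp N k l}

/-- `G` is a circle graph: the intersection graph of chords of a circle, equivalently the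
overlap graph of a family of intervals with pairwise distinct endpoints. -/
def IsCircleGraph {V : Type} (G : SimpleGraph V) : Prop :=
  ∃ a b : V → ℝ, (∀ v, a v < b v) ∧
    (∀ v w : V, v ≠ w → a v ≠ a w ∧ a v ≠ b w ∧ b v ≠ a w ∧ b v ≠ b w) ∧
    (∀ v w, G.Adj v w ↔
      (a v < a w ∧ a w < b v ∧ b v < b w) ∨ (a w < a v ∧ a v < b w ∧ b w < b v))

/-- Vertex set of the split graph witnessing unbounded mim-width: a clique `Fin m`
together with one independent vertex for each nonempty subset of the clique. -/
abbrev splitV (m : ℕ) := Fin m ⊕ {S : Finset (Fin m) // S.Nonempty}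

/-- The split graph with clique of size `m` and an independent set of size `2^m - 1`
whose vertices have pairwise distinct nonempty neighborhoods in the clique. -/
def splitG (m : ℕ) : SimpleGraph (splitV m) :=
  SimpleGraph.fromRel (fun x y =>
    match x, y with
    | Sum.inl i, Sum.inl j => i ≠ j
    | Sum.inl i, Sum.inr S => i ∈ S.1
    | _, _ => False)

end


section TreeAux
namespace MyAux
open SimpleGraph
variable {β : Type}


/-- Splitting reachability at a deleted edge. -/
lemma walk_delete_split_aux {T : SimpleGraph β} (x y : β) {u z : β} (w : T.Walk u z) :
    (T.deleteEdges {s(x,y)}).Reachable u x ∨ (T.deleteEdges {s(x,y)}).Reachable u y ∨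
      (T.deleteEdges {s(x,y)}).Reachable u z := by
  induction w with
  | nil => exact Or.inr (Or.inr (Reachable.refl _))
  | @cons a b c h q ih =>
    by_cases he : s(a, b) = s(x, y)
    · rw [Sym2.eq_iff] at he
      rcases he with ⟨rfl, rfl⟩ | ⟨rfl, rfl⟩
      · exact Or.inl (Reachable.refl _)
      · exact Or.inr (Or.inl (Reachable.refl _))
    · have hadj : (T.deleteEdges {s(x,y)}).Adj a b := by
        rw [SimpleGraph.deleteEdges_adj]
        exact ⟨h, by simpa using he⟩
      rcases ih with h1 | h1 | h1
      · exact Or.inl (hadj.reachable.trans h1)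
      · exact Or.inr (Or.inl (hadj.reachable.trans h1))
      · exact Or.inr (Or.inr (hadj.reachable.trans h1))

lemma walk_delete_split {T : SimpleGraph β} {x y u : β} (w : T.Walk u x) :
    (T.deleteEdges {s(x,y)}).Reachable u x ∨ (T.deleteEdges {s(x,y)}).Reachable u y := by
  rcases walk_delete_split_aux x y w with h | h | h
  · exact Or.inl h
  · exact Or.inr h
  · exact Or.inl h

lemma reach_delete_split {T : SimpleGraph β} (hT : T.Connected) (x y u : β) :
    (T.deleteEdges {s(x,y)}).Reachable u x ∨ (T.deleteEdges {s(x,y)}).Reachable u y := by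
  obtain ⟨w⟩ := hT.preconnected u x
  exact walk_delete_split w

lemma deleteEdges_eq_sdiff (T : SimpleGraph β) (s : Set (Sym2 β)) :
    T.deleteEdges s = T \ fromEdgeSet s := rfl

lemma bridge_of_acyclic {T : SimpleGraph β} (ha : T.IsAcyclic) {x y : β} (h : T.Adj x y) :
    ¬ (T.deleteEdges {s(x,y)}).Reachable x y := by
  have := (isAcyclic_iff_forall_adj_isBridge.mp ha) h
  rw [isBridge_iff] at this
  exact this

lemma not_reach_both {T : SimpleGraph β} (ha : T.IsAcyclic) {x y u : β} (h : T.Adj x y)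
    (h1 : (T.deleteEdges {s(x,y)}).Reachable u x)
    (h2 : (T.deleteEdges {s(x,y)}).Reachable u y) : False :=
  bridge_of_acyclic ha h (h1.symm.trans h2)

/-- A walk in `T - s(c,y)` ending at `c` cannot pass through `y` (if `T` acyclic, `y ~ c`). -/
lemma walk_avoid {T : SimpleGraph β} (ha : T.IsAcyclic) {c y b : β} (hadj : T.Adj y c)
    (w : (T.deleteEdges {s(c,y)}).Walk b c) : y ∉ w.support := by
  intro hy
  have hr : (T.deleteEdges {s(c,y)}).Reachable y c := ⟨w.dropUntil y hy⟩
  have : (T.deleteEdges {s(y,c)}).Reachable y c := by rwa [Sym2.eq_swap] at hr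
  exact bridge_of_acyclic ha hadj this

/-- Transfer a walk that avoids vertex `y` to a graph obtained by deleting edges at `y`. -/
lemma walk_transfer_avoid {T : SimpleGraph β} {u v y z z' : β}
    (w : (T.deleteEdges {s(z,y)}).Walk u v) (hy : y ∉ w.support) :
    ∃ w' : (T.deleteEdges {s(z',y)}).Walk u v, w'.support = w.support := by
  have hedges : ∀ e ∈ w.edges, e ∈ (T.deleteEdges {s(z',y)}).edgeSet := by
    intro e he
    have h1 : e ∈ (T.deleteEdges {s(z,y)}).edgeSet := w.edges_subset_edgeSet he
    rw [SimpleGraph.edgeSet_deleteEdges] at h1 ⊢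
    refine ⟨h1.1, ?_⟩
    intro hcon
    rw [Set.mem_singleton_iff] at hcon
    subst hcon
    exact hy (w.snd_mem_support_of_mem_edges (by simp [Sym2.eq_swap] at he ⊢; exact (by simpa [Sym2.eq_swap] using he)))
  exact ⟨w.transfer _ hedges, w.support_transfer _⟩

lemma reach_split_at {T : SimpleGraph β} (ha : T.IsAcyclic) {x y u : β} (hxy : T.Adj x y)
    (hr : (T.deleteEdges {s(x,y)}).Reachable u y) (hu : u ≠ y) :
    ∃ c, T.Adj y c ∧ c ≠ x ∧ (T.deleteEdges {s(c,y)}).Reachable u c := by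
  obtain ⟨w0⟩ := hr
  obtain ⟨p, hp⟩ := w0.toPath
  have hq : (p.reverse).IsPath := hp.reverse
  generalize hgen : p.reverse = q at hq
  clear hgen hp w0 p
  cases q with
  | nil => exact absurd rfl hu
  | @cons _ c _ h t =>
    have hTyc : T.Adj _ c := (SimpleGraph.deleteEdges_adj.mp h).1
    have hne : s(_, c) ∉ ({s(x,y)} : Set (Sym2 β)) := (SimpleGraph.deleteEdges_adj.mp h).2
    have hcx : c ≠ x := by
      rintro rfl
      apply hne
      simp [Sym2.eq_swap]
    have hynotin : y ∉ t.support := by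
      have := hq.support_nodup
      rw [SimpleGraph.Walk.support_cons] at this
      exact (List.nodup_cons.mp this).1
    obtain ⟨t', ht'⟩ := walk_transfer_avoid (z' := c) t hynotin
    exact ⟨c, hTyc, hcx, ⟨t'.reverse⟩⟩

lemma branch_into_reach {T : SimpleGraph β} (ha : T.IsAcyclic) {x y c u : β} (hxy : T.Adj x y)
    (hyc : T.Adj y c) (hcx : c ≠ x)
    (hr : (T.deleteEdges {s(c,y)}).Reachable u c) :
    (T.deleteEdges {s(x,y)}).Reachable u y ∧ u ≠ y := by
  obtain ⟨w⟩ := hr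
  have hyw : y ∉ w.support := walk_avoid ha hyc w
  obtain ⟨w', hw'⟩ := walk_transfer_avoid (z' := x) w hyw
  have hyw' : y ∉ w'.support := by rw [hw']; exact hyw
  have huy : u ≠ y := by
    rintro rfl
    exact hyw' w'.start_mem_support
  have hcy : (T.deleteEdges {s(x,y)}).Adj c y := by
    rw [SimpleGraph.deleteEdges_adj]
    refine ⟨hyc.symm, ?_⟩
    intro hcon
    rw [Set.mem_singleton_iff, Sym2.eq_iff] at hcon
    rcases hcon with ⟨rfl, -⟩ | ⟨rfl, rfl⟩
    · exact hcx rfl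
    · exact hyc.ne rfl
  exact ⟨⟨w'.append (hcy.toWalk)⟩, huy⟩

/-- The two branch sides at a vertex are disjoint. -/
lemma branch_disjoint {T : SimpleGraph β} (ha : T.IsAcyclic) {y z1 z2 u : β}
    (h1 : T.Adj y z1) (h2 : T.Adj y z2) (h12 : z1 ≠ z2)
    (hr1 : (T.deleteEdges {s(z1,y)}).Reachable u z1)
    (hr2 : (T.deleteEdges {s(z2,y)}).Reachable u z2) : False := by
  obtain ⟨w1⟩ := hr1
  have hy1 : y ∉ w1.support := walk_avoid ha h1 w1
  obtain ⟨w2⟩ := hr2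
  have hy2 : y ∉ w2.support := walk_avoid ha h2 w2
  obtain ⟨w2', hw2'⟩ := walk_transfer_avoid (z' := z1) w2 hy2
  have hyz2 : (T.deleteEdges {s(z1,y)}).Adj y z2 := by
    rw [SimpleGraph.deleteEdges_adj]
    refine ⟨h2, ?_⟩
    intro hcon
    rw [Set.mem_singleton_iff, Sym2.eq_iff] at hcon
    rcases hcon with ⟨rfl, rfl⟩ | ⟨-, rfl⟩
    · exact h1.ne rfl
    · exact h12 rfl
  have : (T.deleteEdges {s(z1,y)}).Reachable y z1 :=
    (hyz2.reachable.trans ⟨w2'.reverse⟩).trans ⟨w1⟩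
  have : (T.deleteEdges {s(y,z1)}).Reachable y z1 := by rwa [Sym2.eq_swap] at this
  exact bridge_of_acyclic ha h1 this

/-- Reachability to a degree-one vertex in the graph minus its unique edge is trivial. -/
lemma reach_leaf {T : SimpleGraph β} {x y u : β} (hnb : T.neighborSet x = {y})
    (hr : (T.deleteEdges {s(x,y)}).Reachable u x) : u = x := by
  obtain ⟨w0⟩ := hr
  obtain ⟨p, hp⟩ := w0.toPath
  generalize hgen : p.reverse = q
  clear hgen hp w0 p
  cases q with
  | nil => rfl
  | @cons _ c _ h t =>
    exfalso
    have hTyc : T.Adj x c := (SimpleGraph.deleteEdges_adj.mp h).1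
    have hne : s(x, c) ∉ ({s(x,y)} : Set (Sym2 β)) := (SimpleGraph.deleteEdges_adj.mp h).2
    have : c ∈ T.neighborSet x := hTyc
    rw [hnb, Set.mem_singleton_iff] at this
    subst this
    exact hne rfl

end MyAux
end TreeAux


section CutAux
namespace MyAux
open SimpleGraph
variable {V : Type} [Fintype V]

lemma delete_swap {β : Type} (T : SimpleGraph β) (x y : β) :
    T.deleteEdges {s(x,y)} = T.deleteEdges {s(y,x)} := by rw [Sym2.eq_swap]

variable (D : BranchDecomp V)

lemma cut_mem_union {x y : D.β} (hadj : D.T.Adj x y) (v : V) :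
    v ∈ D.cut x y ∨ v ∈ D.cut y x := by
  have := reach_delete_split (T := D.T) D.connected x y (D.L v)
  rcases this with h | h
  · exact Or.inl h
  · right
    show (D.T.deleteEdges {s(y,x)}).Reachable (D.L v) y
    rwa [← delete_swap]

lemma cut_compl {x y : D.β} (hadj : D.T.Adj x y) : D.cut y x = (D.cut x y)ᶜ := by
  ext v
  constructor
  · intro hv hv'
    have hv2 : (D.T.deleteEdges {s(x,y)}).Reachable (D.L v) y := by
      have : (D.T.deleteEdges {s(y,x)}).Reachable (D.L v) y := hv
      rwa [delete_swap]
    exact not_reach_both D.acyclic hadj hv' hv2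
  · intro hv
    rcases cut_mem_union D hadj v with h | h
    · exact absurd h hv
    · exact h

lemma cut_ncard_add {x y : D.β} (hadj : D.T.Adj x y) :
    (D.cut x y).ncard + (D.cut y x).ncard = Fintype.card V := by
  rw [cut_compl D hadj, Set.ncard_add_ncard_compl, Nat.card_eq_fintype_card]

lemma cut_leaf {x y : D.β} (hadj : D.T.Adj x y) (hdeg : (D.T.neighborSet y).ncard = 1) :
    (D.cut y x).ncard ≤ 1 := by
  obtain ⟨c, hc⟩ := Set.ncard_eq_one.mp hdeg
  have hx : x ∈ D.T.neighborSet y := hadj.symm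
  rw [hc, Set.mem_singleton_iff] at hx
  subst hx
  obtain ⟨v0, hv0⟩ := (D.leaves y).mp hdeg
  have hsub : D.cut y x ⊆ {v0} := by
    intro u hu
    have : D.L u = y := reach_leaf hc hu
    rw [← hv0] at this
    exact D.inj this
  calc (D.cut y x).ncard ≤ ({v0} : Set V).ncard := Set.ncard_le_ncard hsub (Set.toFinite _)
    _ = 1 := Set.ncard_singleton v0

/-- The set of tree vertices on the `x`-side of the edge `xy`. -/
def VS (x y : D.β) : Set D.β := {b | (D.T.deleteEdges {s(x,y)}).Reachable b x}

lemma cut_split {x y : D.β} (hadj : D.T.Adj x y) (hdeg : (D.T.neighborSet y).ncard = 3) :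
    ∃ z1 z2 : D.β, z1 ≠ z2 ∧ z1 ≠ x ∧ z2 ≠ x ∧ D.T.Adj y z1 ∧ D.T.Adj y z2 ∧
      D.cut y x = D.cut z1 y ∪ D.cut z2 y ∧ Disjoint (D.cut z1 y) (D.cut z2 y) ∧
      VS D z1 y ⊆ VS D y x \ {y} ∧ VS D z2 y ⊆ VS D y x \ {y} := by
  classical
  have hy_not_leaf : ¬ ∃ v, D.L v = y := by
    intro hv
    have := (D.leaves y).mpr hv
    omega
  obtain ⟨a, b, c, hab, hac, hbc, hset⟩ := Set.ncard_eq_three.mp hdeg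
  have hx : x ∈ D.T.neighborSet y := hadj.symm
  rw [hset] at hx
  -- pick z1 z2 as the two elements other than x
  have key : ∀ z1 z2 : D.β, z1 ≠ z2 → z1 ≠ x → z2 ≠ x → D.T.Adj y z1 → D.T.Adj y z2 →
      (∀ w : D.β, D.T.Adj y w → w = x ∨ w = z1 ∨ w = z2) →
      ∃ z1 z2 : D.β, z1 ≠ z2 ∧ z1 ≠ x ∧ z2 ≠ x ∧ D.T.Adj y z1 ∧ D.T.Adj y z2 ∧
      D.cut y x = D.cut z1 y ∪ D.cut z2 y ∧ Disjoint (D.cut z1 y) (D.cut z2 y) ∧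
      VS D z1 y ⊆ VS D y x \ {y} ∧ VS D z2 y ⊆ VS D y x \ {y} := by
    intro z1 z2 h12 h1x h2x hyz1 hyz2 hcases
    refine ⟨z1, z2, h12, h1x, h2x, hyz1, hyz2, ?_, ?_, ?_, ?_⟩
    · ext u
      constructor
      · intro hu
        have hu' : (D.T.deleteEdges {s(x,y)}).Reachable (D.L u) y := by
          have : (D.T.deleteEdges {s(y,x)}).Reachable (D.L u) y := hu
          rwa [delete_swap]
        have hLu : D.L u ≠ y := fun h => hy_not_leaf ⟨u, h⟩
        obtain ⟨w, hw1, hw2, hw3⟩ := reach_split_at D.acyclic hadj hu' hLu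
        rcases hcases w hw1 with rfl | rfl | rfl
        · exact absurd rfl hw2
        · exact Or.inl hw3
        · exact Or.inr hw3
      · intro hu
        have : (D.T.deleteEdges {s(x,y)}).Reachable (D.L u) y := by
          rcases hu with hu | hu
          · exact (branch_into_reach D.acyclic hadj hyz1 h1x hu).1
          · exact (branch_into_reach D.acyclic hadj hyz2 h2x hu).1
        show (D.T.deleteEdges {s(y,x)}).Reachable (D.L u) y
        rwa [← delete_swap]
    · rw [Set.disjoint_left]
      intro u hu1 hu2
      exact branch_disjoint D.acyclic hyz1 hyz2 h12 hu1 hu2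
    · intro b hb
      have := branch_into_reach D.acyclic hadj hyz1 h1x hb
      constructor
      · show (D.T.deleteEdges {s(y,x)}).Reachable b y
        rw [← delete_swap]; exact this.1
      · simpa using this.2
    · intro b hb
      have := branch_into_reach D.acyclic hadj hyz2 h2x hb
      constructor
      · show (D.T.deleteEdges {s(y,x)}).Reachable b y
        rw [← delete_swap]; exact this.1
      · simpa using this.2
  have adjmem : ∀ w : D.β, D.T.Adj y w → w = a ∨ w = b ∨ w = c := by
    intro w hw
    have : w ∈ D.T.neighborSet y := hw
    rw [hset] at this
    simpa using this
  have adjab : ∀ w ∈ ({a, b, c} : Set D.β), D.T.Adj y w := by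
    intro w hw
    have : w ∈ D.T.neighborSet y := by rw [hset]; exact hw
    exact this
  simp only [Set.mem_insert_iff, Set.mem_singleton_iff] at hx
  rcases hx with rfl | rfl | rfl
  · exact key b c hbc (Ne.symm hab) (Ne.symm hac) (adjab b (by simp)) (adjab c (by simp))
      (fun w hw => by rcases adjmem w hw with h|h|h <;> tauto)
  · exact key a c hac hab (Ne.symm hbc) (adjab a (by simp)) (adjab c (by simp))
      (fun w hw => by rcases adjmem w hw with h|h|h <;> tauto)
  · exact key a b hab hac hbc (adjab a (by simp)) (adjab b (by simp))
      (fun w hw => by rcases adjmem w hw with h|h|h <;> tauto)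

end MyAux
end CutAux


section BalancedAux
namespace MyAux
open SimpleGraph
variable {V : Type} [Fintype V] (D : BranchDecomp V)

lemma balanced_aux (hn : 5 ≤ Fintype.card V) (k : ℕ) :
    ∀ x y : D.β, D.T.Adj x y → 3 * (D.cut x y).ncard < Fintype.card V →
      (VS D y x).ncard ≤ k →
      ∃ x' y', D.T.Adj x' y' ∧ Fintype.card V ≤ 3 * (D.cut x' y').ncard ∧
        Fintype.card V ≤ 3 * (D.cut y' x').ncard := by
  letI := D.finβ
  induction k with
  | zero =>
    intro x y hadj hsm hk
    exfalso
    have hy : y ∈ VS D y x := Reachable.refl _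
    have : 0 < (VS D y x).ncard := (Set.ncard_pos (Set.toFinite _)).mpr ⟨y, hy⟩
    omega
  | succ k ih =>
    intro x y hadj hsm hk
    have hsum := cut_ncard_add D hadj
    rcases D.subcubic y with hdeg | hdeg
    · have := cut_leaf D hadj hdeg
      omega
    · obtain ⟨z1, z2, h12, h1x, h2x, hyz1, hyz2, hcuteq, hdisj, hvs1, hvs2⟩ :=
        cut_split D hadj hdeg
      have hcards : (D.cut z1 y).ncard + (D.cut z2 y).ncard = (D.cut y x).ncard := by
        rw [hcuteq, Set.ncard_union_eq hdisj (Set.toFinite _) (Set.toFinite _)]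
      have key : ∀ w1 w2 : D.β, D.T.Adj y w1 → VS D w1 y ⊆ VS D y x \ {y} →
          (D.cut w1 y).ncard + (D.cut w2 y).ncard = (D.cut y x).ncard →
          (D.cut w2 y).ncard ≤ (D.cut w1 y).ncard →
          ∃ x' y', D.T.Adj x' y' ∧ Fintype.card V ≤ 3 * (D.cut x' y').ncard ∧
            Fintype.card V ≤ 3 * (D.cut y' x').ncard := by
        intro w1 w2 hyw1 hvs hsum2 hle
        have hbig : Fintype.card V + 1 ≤ 3 * (D.cut w1 y).ncard := by omega
        by_cases hdone : Fintype.card V ≤ 3 * (D.cut y w1).ncard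
        · exact ⟨w1, y, hyw1.symm, by omega, hdone⟩
        · push_neg at hdone
          apply ih y w1 hyw1 (by omega)
          have hy : y ∈ VS D y x := Reachable.refl _
          have h1 : (VS D w1 y).ncard ≤ (VS D y x \ {y}).ncard :=
            Set.ncard_le_ncard hvs (Set.toFinite _)
          have h2 : (VS D y x \ {y}).ncard < (VS D y x).ncard :=
            Set.ncard_diff_singleton_lt_of_mem hy (Set.toFinite _)
          omega
      rcases le_total (D.cut z2 y).ncard (D.cut z1 y).ncard with h | h
      · exact key z1 z2 hyz1 hvs1 hcards h
      · exact key z2 z1 hyz2 hvs2 (by omega) h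

lemma exists_balanced (hn : 5 ≤ Fintype.card V) :
    ∃ x y, D.T.Adj x y ∧ Fintype.card V ≤ 3 * (D.cut x y).ncard ∧
      Fintype.card V ≤ 3 * (D.cut y x).ncard := by
  letI := D.finβ
  have hVne : Nonempty V := by
    rw [← Fintype.card_pos_iff]; omega
  obtain ⟨v0⟩ := hVne
  have hnb : (D.T.neighborSet (D.L v0)).Nonempty := by
    apply Set.nonempty_of_ncard_ne_zero
    rcases D.subcubic (D.L v0) with h | h <;> omega
  obtain ⟨y0, hy0⟩ := hnb
  have hadj : D.T.Adj (D.L v0) y0 := hy0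
  by_cases h1 : 3 * (D.cut (D.L v0) y0).ncard < Fintype.card V
  · exact balanced_aux D hn ((VS D y0 (D.L v0)).ncard) (D.L v0) y0 hadj h1 le_rfl
  · by_cases h2 : 3 * (D.cut y0 (D.L v0)).ncard < Fintype.card V
    · exact balanced_aux D hn ((VS D (D.L v0) y0).ncard) y0 (D.L v0) hadj.symm h2 le_rfl
    · exact ⟨D.L v0, y0, hadj, by omega, by omega⟩

end MyAux
end BalancedAux


section GridAux
namespace MyAux
open SimpleGraph

lemma le_mimval {V : Type} [Fintype V] {G : SimpleGraph V} {A : Set V} {m : ℕ}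
    (h : IsMimMatching G A m) : m ≤ mimval G A := by
  apply le_csSup
  · refine ⟨Fintype.card V, ?_⟩
    rintro k ⟨a, b, ha, hb, _⟩
    simpa using Fintype.card_le_of_injective a ha
  · exact h

lemma mim_compl {V : Type} {G : SimpleGraph V} {A : Set V} {m : ℕ}
    (h : IsMimMatching G Aᶜ m) : IsMimMatching G A m := by
  obtain ⟨a, b, ha, hb, haA, hbA, hadj⟩ := h
  refine ⟨b, a, hb, ha, ?_, ?_, ?_⟩
  · intro i
    have := hbA i
    simpa using this
  · intro i
    have := haA i
    simpa using this
  · intro i j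
    rw [SimpleGraph.adj_comm]
    rw [hadj j i]
    exact eq_comm

lemma mimval_compl_le {V : Type} [Fintype V] (G : SimpleGraph V) (A : Set V) :
    mimval G Aᶜ ≤ mimval G A := by
  apply csSup_le
  · refine ⟨0, ⟨Fin.elim0, Fin.elim0, ?_, ?_, ?_, ?_, ?_⟩⟩ <;>
      first
      | (intro i; exact i.elim0)
      | (intro i j; exact i.elim0)
  · intro m hm
    exact le_mimval (mim_compl hm)

variable {p q : ℕ}

lemma ccGrid_adj {u v : Fin p × Fin q} :
    (ccGrid p q).Adj u v ↔ u ≠ v ∧ (u.2 = v.2 ∨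
      (u.1 = v.1 ∧ ((u.2 : ℕ) + 1 = v.2 ∨ (v.2 : ℕ) + 1 = u.2))) := by
  show (SimpleGraph.fromRel _).Adj u v ↔ _
  rw [SimpleGraph.fromRel_adj]
  apply and_congr_right'
  constructor
  · rintro ((h | ⟨h1, h2⟩) | (h | ⟨h1, h2⟩))
    · exact Or.inl h
    · exact Or.inr ⟨h1, h2⟩
    · exact Or.inl h.symm
    · exact Or.inr ⟨h1.symm, h2.symm⟩
  · intro h
    exact Or.inl h

lemma rowMatch (A : Set (Fin p × Fin q)) (R : Finset (Fin p)) (cA cB : Fin p → Fin q)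
    (hA : ∀ r ∈ R, ((r, cA r) : Fin p × Fin q) ∈ A)
    (hB : ∀ r ∈ R, ((r, cB r) : Fin p × Fin q) ∉ A)
    (hadj : ∀ r ∈ R, ((cA r : ℕ) + 1 = cB r ∨ (cB r : ℕ) + 1 = cA r))
    (hcc : ∀ r ∈ R, ∀ r' ∈ R, r ≠ r' → cA r ≠ cB r') :
    IsMimMatching (ccGrid p q) A R.card := by
  classical
  let e : Fin R.card → {x // x ∈ R} := R.equivFin.symm
  have he : Function.Injective e := R.equivFin.symm.injective
  have hemem : ∀ i, (e i : Fin p) ∈ R := fun i => (e i).2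
  have hecoe : Function.Injective (fun i => (e i : Fin p)) :=
    fun i j h => he (Subtype.coe_injective h)
  refine ⟨fun i => ((e i : Fin p), cA (e i)), fun i => ((e i : Fin p), cB (e i)),
    ?_, ?_, ?_, ?_, ?_⟩
  · intro i j h
    exact hecoe (congrArg Prod.fst h)
  · intro i j h
    exact hecoe (congrArg Prod.fst h)
  · intro i; exact hA _ (hemem i)
  · intro i; exact hB _ (hemem i)
  · intro i j
    rw [ccGrid_adj]
    constructor
    · rintro ⟨hne, (h | ⟨h1, h2⟩)⟩
      · -- same column: only possible if rows equal? no: cA (e i) = cB (e j)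
        by_contra hij
        exact hcc _ (hemem i) _ (hemem j) (fun hh => hij (hecoe hh)) h
      · -- same row
        exact hecoe h1
    · rintro rfl
      have hd := hadj _ (hemem i)
      refine ⟨?_, Or.inr ⟨rfl, hd⟩⟩
      intro hcon
      have : cA (e i) = cB (e i) := congrArg Prod.snd hcon
      rcases hd with hd | hd <;> (rw [this] at hd; omega)

lemma colMatch (A : Set (Fin p × Fin q)) (J : Finset (Fin q)) (rA rB : Fin q → Fin p)
    (hA : ∀ j ∈ J, ((rA j, j) : Fin p × Fin q) ∈ A)
    (hB : ∀ j ∈ J, ((rB j, j) : Fin p × Fin q) ∉ A)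
    (hsep : ∀ j ∈ J, ∀ j' ∈ J, j ≠ j' → (j : ℕ) + 1 ≠ (j' : ℕ)) :
    IsMimMatching (ccGrid p q) A J.card := by
  classical
  let e : Fin J.card → {x // x ∈ J} := J.equivFin.symm
  have he : Function.Injective e := J.equivFin.symm.injective
  have hemem : ∀ i, (e i : Fin q) ∈ J := fun i => (e i).2
  have hecoe : Function.Injective (fun i => (e i : Fin q)) :=
    fun i j h => he (Subtype.coe_injective h)
  refine ⟨fun i => (rA (e i), (e i : Fin q)), fun i => (rB (e i), (e i : Fin q)),
    ?_, ?_, ?_, ?_, ?_⟩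
  · intro i j h
    exact hecoe (congrArg Prod.snd h)
  · intro i j h
    exact hecoe (congrArg Prod.snd h)
  · intro i; exact hA _ (hemem i)
  · intro i; exact hB _ (hemem i)
  · intro i j
    rw [ccGrid_adj]
    constructor
    · rintro ⟨hne, (h | ⟨h1, h2⟩)⟩
      · exact hecoe h
      · exfalso
        have hne2 : (e i : Fin q) ≠ (e j : Fin q) := by
          intro hcon
          apply hne
          have h1' : rA (e i) = rB (e j) := h1
          exact Prod.ext h1' hcon
        rcases h2 with h2 | h2
        · exact hsep _ (hemem i) _ (hemem j) hne2 h2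
        · exact hsep _ (hemem j) _ (hemem i) hne2.symm h2
    · rintro rfl
      refine ⟨?_, Or.inl rfl⟩
      intro hcon
      have : rA (e i) = rB (e i) := congrArg Prod.fst hcon
      apply hB _ (hemem i)
      rw [← this]
      exact hA _ (hemem i)

end MyAux
end GridAux


section FlipAux
namespace MyAux
open SimpleGraph Finset

variable {p q : ℕ}

lemma flip_bound (X : Set (Fin p × Fin q)) (jstar j0 : Fin q)
    (hfull : ∀ i : Fin p, ((i, jstar) : Fin p × Fin q) ∈ X) :
    (Finset.univ.filter (fun i : Fin p => ((i, j0) : Fin p × Fin q) ∉ X)).card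
      ≤ 2 * mimval (ccGrid p q) X := by
  classical
  set N := Finset.univ.filter (fun i : Fin p => ((i, j0) : Fin p × Fin q) ∉ X) with hN
  have hq0 : 0 < q := j0.pos
  have hjs : (jstar : ℕ) ≤ q - 1 := by have := jstar.isLt; omega
  have hj0 : (j0 : ℕ) ≤ q - 1 := by have := j0.isLt; omega
  set g : ℕ → Fin q := fun m => ⟨min m (q-1), by omega⟩ with hg
  have hgval : ∀ m : ℕ, m ≤ q - 1 → (g m : ℕ) = m := by
    intro m hm
    simp only [hg]
    omega
  have hgstar : g (jstar : ℕ) = jstar := Fin.val_injective (hgval _ hjs)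
  have hgj0 : g (j0 : ℕ) = j0 := Fin.val_injective (hgval _ hj0)
  rcases lt_trichotomy (jstar : ℕ) (j0 : ℕ) with hlt | heq | hgt
  · -- jstar < j0 : take last flip going right
    set F : Fin p → Finset ℕ :=
      fun i => (Finset.Icc (jstar : ℕ) (j0 : ℕ)).filter
        (fun m => ((i, g m) : Fin p × Fin q) ∈ X) with hF
    have hFne : ∀ i, (F i).Nonempty := by
      intro i
      refine ⟨(jstar : ℕ), ?_⟩
      rw [hF, Finset.mem_filter, Finset.mem_Icc]
      exact ⟨⟨le_rfl, le_of_lt hlt⟩, by rw [hgstar]; exact hfull i⟩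
    set L : Fin p → ℕ := fun i => (F i).max' (hFne i) with hL
    have hLmem : ∀ i, L i ∈ F i := fun i => (F i).max'_mem (hFne i)
    have hLicc : ∀ i, (jstar : ℕ) ≤ L i ∧ L i ≤ (j0 : ℕ) := by
      intro i
      have := hLmem i
      rw [hF, Finset.mem_filter, Finset.mem_Icc] at this
      exact this.1
    have hLX : ∀ i, ((i, g (L i)) : Fin p × Fin q) ∈ X := by
      intro i
      have := hLmem i
      rw [hF, Finset.mem_filter] at this
      exact this.2
    have hLne : ∀ i ∈ N, L i < (j0 : ℕ) := by
      intro i hi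
      rcases lt_or_eq_of_le (hLicc i).2 with h | h
      · exact h
      · exfalso
        rw [hN, Finset.mem_filter] at hi
        apply hi.2
        have := hLX i
        rwa [h, hgj0] at this
    have hLnot : ∀ i ∈ N, ((i, g (L i + 1)) : Fin p × Fin q) ∉ X := by
      intro i hi hcon
      have hmem : L i + 1 ∈ F i := by
        rw [hF, Finset.mem_filter, Finset.mem_Icc]
        exact ⟨⟨by have := (hLicc i).1; omega, by have := hLne i hi; omega⟩, hcon⟩
      have hkey : L i + 1 ≤ L i := by
        rw [hL]
        exact (F i).le_max' _ hmem
      omega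
    have hpar : ∀ r : ℕ, (N.filter (fun i => L i % 2 = r)).card ≤ mimval (ccGrid p q) X := by
      intro r
      apply le_mimval
      apply rowMatch X _ (fun i => g (L i)) (fun i => g (L i + 1))
      · intro i hi
        exact hLX i
      · intro i hi
        exact hLnot i (Finset.mem_of_mem_filter i hi)
      · intro i hi
        left
        have h1 : L i ≤ q - 1 := by
          have := hLicc i
          omega
        rw [hgval _ h1, hgval _ (by
          have := Finset.mem_of_mem_filter i hi
          have := hLne i this
          omega)]
      · intro i hi i' hi' hne hcon
        rw [Finset.mem_filter] at hi hi'
        have hv := congrArg Fin.val hcon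
        rw [hgval _ (by have := hLicc i; omega),
          hgval _ (by have := hLne i' hi'.1; omega)] at hv
        omega
    have hsplit := Finset.card_filter_add_card_filter_not
      (s := N) (p := fun i => L i % 2 = 0)
    have heq1 : N.filter (fun i => ¬ (L i % 2 = 0)) = N.filter (fun i => L i % 2 = 1) := by
      apply Finset.filter_congr
      intro i _
      constructor
      · intro h; omega
      · intro h; omega
    have h0 := hpar 0
    have h1 := hpar 1
    rw [heq1] at hsplit
    omega
  · -- jstar = j0 : N is empty
    have : N = ∅ := by
      apply Finset.eq_empty_of_forall_notMem
      intro i hi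
      rw [hN, Finset.mem_filter] at hi
      apply hi.2
      have : jstar = j0 := Fin.val_injective heq
      rw [← this]
      exact hfull i
    rw [this]
    simp
  · -- j0 < jstar : take first flip
    set F : Fin p → Finset ℕ :=
      fun i => (Finset.Icc (j0 : ℕ) (jstar : ℕ)).filter
        (fun m => ((i, g m) : Fin p × Fin q) ∈ X) with hF
    have hFne : ∀ i, (F i).Nonempty := by
      intro i
      refine ⟨(jstar : ℕ), ?_⟩
      rw [hF, Finset.mem_filter, Finset.mem_Icc]
      exact ⟨⟨le_of_lt hgt, le_rfl⟩, by rw [hgstar]; exact hfull i⟩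
    set L : Fin p → ℕ := fun i => (F i).min' (hFne i) with hL
    have hLmem : ∀ i, L i ∈ F i := fun i => (F i).min'_mem (hFne i)
    have hLicc : ∀ i, (j0 : ℕ) ≤ L i ∧ L i ≤ (jstar : ℕ) := by
      intro i
      have := hLmem i
      rw [hF, Finset.mem_filter, Finset.mem_Icc] at this
      exact this.1
    have hLX : ∀ i, ((i, g (L i)) : Fin p × Fin q) ∈ X := by
      intro i
      have := hLmem i
      rw [hF, Finset.mem_filter] at this
      exact this.2
    have hLne : ∀ i ∈ N, (j0 : ℕ) < L i := by
      intro i hi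
      rcases lt_or_eq_of_le (hLicc i).1 with h | h
      · exact h
      · exfalso
        rw [hN, Finset.mem_filter] at hi
        apply hi.2
        have := hLX i
        rwa [← h, hgj0] at this
    have hLnot : ∀ i ∈ N, ((i, g (L i - 1)) : Fin p × Fin q) ∉ X := by
      intro i hi hcon
      have hmem : L i - 1 ∈ F i := by
        rw [hF, Finset.mem_filter, Finset.mem_Icc]
        exact ⟨⟨by have := hLne i hi; omega, by have := (hLicc i).2; omega⟩, hcon⟩
      have hkey : L i ≤ L i - 1 := by
        rw [hL]
        exact (F i).min'_le _ hmem
      have := hLne i hi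
      omega
    have hpar : ∀ r : ℕ, (N.filter (fun i => L i % 2 = r)).card ≤ mimval (ccGrid p q) X := by
      intro r
      apply le_mimval
      apply rowMatch X _ (fun i => g (L i)) (fun i => g (L i - 1))
      · intro i hi
        exact hLX i
      · intro i hi
        exact hLnot i (Finset.mem_of_mem_filter i hi)
      · intro i hi
        right
        have h1 : L i ≤ q - 1 := by
          have := hLicc i
          omega
        have h2 : 0 < L i := by have := hLne i (Finset.mem_of_mem_filter i hi); omega
        rw [hgval _ h1, hgval _ (by omega)]
        omega
      · intro i hi i' hi' hne hcon
        rw [Finset.mem_filter] at hi hi'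
        have hv := congrArg Fin.val hcon
        have h2 : 0 < L i' := by have := hLne i' hi'.1; omega
        rw [hgval _ (by have := hLicc i; omega),
          hgval _ (by have := hLicc i'; omega)] at hv
        omega
    have hsplit := Finset.card_filter_add_card_filter_not
      (s := N) (p := fun i => L i % 2 = 0)
    have heq1 : N.filter (fun i => ¬ (L i % 2 = 0)) = N.filter (fun i => L i % 2 = 1) := by
      apply Finset.filter_congr
      intro i _
      constructor
      · intro h; omega
      · intro h; omega
    have h0 := hpar 0
    have h1 := hpar 1
    rw [heq1] at hsplit
    omega

end MyAux
end FlipAux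


section CountAux
namespace MyAux
open SimpleGraph Finset

variable {p q : ℕ}

lemma mixed_bound (X : Set (Fin p × Fin q)) :
    (Finset.univ.filter (fun j : Fin q =>
      (∃ i, ((i, j) : Fin p × Fin q) ∈ X) ∧ (∃ i, ((i, j) : Fin p × Fin q) ∉ X))).card
      ≤ 2 * mimval (ccGrid p q) X := by
  classical
  set Mx := Finset.univ.filter (fun j : Fin q =>
      (∃ i, ((i, j) : Fin p × Fin q) ∈ X) ∧ (∃ i, ((i, j) : Fin p × Fin q) ∉ X)) with hMx
  by_cases hp0 : p = 0
  · have : Mx = ∅ := by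
      apply Finset.eq_empty_of_forall_notMem
      intro j hj
      rw [hMx, Finset.mem_filter] at hj
      obtain ⟨i, -⟩ := hj.2.1
      exact absurd i.isLt (by omega)
    rw [this]
    simp
  haveI : NeZero p := ⟨hp0⟩
  set rA : Fin q → Fin p := fun j =>
    if h : ∃ i, ((i, j) : Fin p × Fin q) ∈ X then h.choose else default with hrA
  set rB : Fin q → Fin p := fun j =>
    if h : ∃ i, ((i, j) : Fin p × Fin q) ∉ X then h.choose else default with hrB
  have hpar : ∀ r : ℕ, (Mx.filter (fun j : Fin q => (j : ℕ) % 2 = r)).card ≤ mimval (ccGrid p q) X := by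
    intro r
    apply le_mimval
    apply colMatch X _ rA rB
    · intro j hj
      have hj2 : j ∈ Mx := Finset.mem_of_mem_filter j hj
      rw [hMx, Finset.mem_filter] at hj2
      obtain ⟨-, hex, -⟩ := hj2
      rw [hrA]
      simp only [dif_pos hex]
      exact hex.choose_spec
    · intro j hj
      have hj2 : j ∈ Mx := Finset.mem_of_mem_filter j hj
      rw [hMx, Finset.mem_filter] at hj2
      obtain ⟨-, -, hex⟩ := hj2
      rw [hrB]
      simp only [dif_pos hex]
      exact hex.choose_spec
    · intro j hj j' hj' hne hcon
      rw [Finset.mem_filter] at hj hj'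
      have := hj.2
      have := hj'.2
      omega
  have hsplit := Finset.card_filter_add_card_filter_not
    (s := Mx) (p := fun j : Fin q => (j : ℕ) % 2 = 0)
  have heq1 : Mx.filter (fun j : Fin q => ¬ ((j : ℕ) % 2 = 0)) = Mx.filter (fun j : Fin q => (j : ℕ) % 2 = 1) := by
    apply Finset.filter_congr
    intro j _
    constructor
    · intro h; omega
    · intro h; omega
  have h0 := hpar 0
  have h1 := hpar 1
  rw [heq1] at hsplit
  omega

lemma set_card_sum (Y : Set (Fin p × Fin q)) :
    Y.ncard = ∑ j : Fin q, (Finset.univ.filter (fun i : Fin p => ((i, j) : Fin p × Fin q) ∈ Y)).card := by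
  classical
  rw [Set.ncard_eq_toFinset_card']
  rw [Finset.card_eq_sum_card_fiberwise (f := Prod.snd) (t := Finset.univ)
    (fun x _ => Finset.mem_univ _)]
  apply Finset.sum_congr rfl
  intro j _
  have himg : Y.toFinset.filter (fun u => u.2 = j)
      = (Finset.univ.filter (fun i : Fin p => ((i, j) : Fin p × Fin q) ∈ Y)).image
          (fun i => (i, j)) := by
    ext u
    simp only [Finset.mem_filter, Set.mem_toFinset, Finset.mem_image, Finset.mem_univ,
      true_and]
    constructor
    · rintro ⟨h1, h2⟩
      refine ⟨u.1, ?_, ?_⟩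
      · have : ((u.1, j) : Fin p × Fin q) = u := by
          rw [← h2]
        rw [this]
        exact h1
      · rw [← h2]
    · rintro ⟨i, hi, rfl⟩
      exact ⟨hi, rfl⟩
  rw [himg, Finset.card_image_of_injective]
  intro a b hab
  exact congrArg Prod.fst hab

lemma case23 (X : Set (Fin p × Fin q))
    (hfull : ∃ js : Fin q, ∀ i, ((i, js) : Fin p × Fin q) ∈ X)
    (hnof : ∀ j : Fin q, ∃ i, ((i, j) : Fin p × Fin q) ∈ X) :
    Xᶜ.ncard ≤ (2 * mimval (ccGrid p q) X) * (2 * mimval (ccGrid p q) X) := by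
  classical
  obtain ⟨js, hjs⟩ := hfull
  set s2 := 2 * mimval (ccGrid p q) X with hs2
  set Mx := Finset.univ.filter (fun j : Fin q =>
      (∃ i, ((i, j) : Fin p × Fin q) ∈ X) ∧ (∃ i, ((i, j) : Fin p × Fin q) ∉ X)) with hMx
  set cnt : Fin q → ℕ :=
    fun j => (Finset.univ.filter (fun i : Fin p => ((i, j) : Fin p × Fin q) ∉ X)).card with hcnt
  have hcntle : ∀ j, cnt j ≤ s2 := fun j => flip_bound X js j hjs
  have hXc : Xᶜ.ncard = ∑ j : Fin q, cnt j := by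
    rw [set_card_sum Xᶜ]
    apply Finset.sum_congr rfl
    intro j _
    rw [hcnt]
    congr 1
    ext i
    simp
  have hzero : ∀ j ∈ Finset.univ, j ∉ Mx → cnt j = 0 := by
    intro j _ hj
    have h2 : ¬ ((∃ i, ((i, j) : Fin p × Fin q) ∈ X) ∧ (∃ i, ((i, j) : Fin p × Fin q) ∉ X)) := by
      intro hcon
      apply hj
      rw [hMx, Finset.mem_filter]
      exact ⟨Finset.mem_univ _, hcon⟩
    have h3 : ¬ ∃ i, ((i, j) : Fin p × Fin q) ∉ X := fun hx => h2 ⟨hnof j, hx⟩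
    rw [hcnt, Finset.card_eq_zero]
    apply Finset.eq_empty_of_forall_notMem
    intro i hi
    rw [Finset.mem_filter] at hi
    exact h3 ⟨i, hi.2⟩
  have hsum : ∑ j : Fin q, cnt j = ∑ j ∈ Mx, cnt j := by
    symm
    apply Finset.sum_subset (Finset.subset_univ Mx) hzero
  have hle : ∑ j ∈ Mx, cnt j ≤ Mx.card * s2 := by
    apply Finset.sum_le_card_nsmul
    intro j _
    exact hcntle j
  have hMxle : Mx.card ≤ s2 := mixed_bound X
  calc Xᶜ.ncard = ∑ j ∈ Mx, cnt j := by rw [hXc, hsum]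
    _ ≤ Mx.card * s2 := hle
    _ ≤ s2 * s2 := Nat.mul_le_mul_right _ hMxle

lemma partB (hp : 12 ≤ p) (hq : 12 ≤ q) (A : Set (Fin p × Fin q))
    (hA : p * q ≤ 3 * A.ncard) (hBc : p * q ≤ 3 * Aᶜ.ncard) :
    min ((p : ℝ) / 4) ((q : ℝ) / 3) ≤ (mimval (ccGrid p q) A : ℝ) := by
  classical
  set s := mimval (ccGrid p q) A with hs
  by_contra hcon
  push_neg at hcon
  rw [lt_min_iff] at hcon
  have hs4 : 4 * s < p := by
    have h := hcon.1
    have : (4 * s : ℝ) < p := by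
      push_cast
      linarith
    exact_mod_cast this
  have hs3 : 3 * s < q := by
    have h := hcon.2
    have : (3 * s : ℝ) < q := by
      push_cast
      linarith
    exact_mod_cast this
  have harith : ¬ (p * q ≤ 3 * ((2 * s) * (2 * s))) := by
    intro h
    have h1 : 4 * s + 1 ≤ p := hs4
    have h2 : 3 * s + 1 ≤ q := hs3
    have h3 : (4 * s + 1) * (3 * s + 1) ≤ p * q := Nat.mul_le_mul h1 h2
    nlinarith
  by_cases hfA : ∃ j : Fin q, ∀ i : Fin p, ((i, j) : Fin p × Fin q) ∈ A
  · by_cases hfB : ∃ j : Fin q, ∀ i : Fin p, ((i, j) : Fin p × Fin q) ∉ A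
    · -- both a full-A and a full-B column: huge matching
      obtain ⟨jA, hjA⟩ := hfA
      obtain ⟨jB, hjB⟩ := hfB
      have := flip_bound A jA jB hjA
      have heq : Finset.univ.filter (fun i : Fin p => ((i, jB) : Fin p × Fin q) ∉ A)
          = Finset.univ := by
        apply Finset.filter_eq_self.mpr
        intro i _
        exact hjB i
      rw [heq, Finset.card_univ, Fintype.card_fin] at this
      omega
    · -- full-A column, no full-B column
      push_neg at hfB
      have h23 := case23 A hfA hfB
      apply harith
      calc p * q ≤ 3 * Aᶜ.ncard := hBc
        _ ≤ 3 * ((2 * s) * (2 * s)) := by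
            apply Nat.mul_le_mul_left
            exact h23
  · by_cases hfB : ∃ j : Fin q, ∀ i : Fin p, ((i, j) : Fin p × Fin q) ∉ A
    · -- full-B column, no full-A column
      push_neg at hfA
      have h23 := case23 Aᶜ (by
        obtain ⟨j, hj⟩ := hfB
        exact ⟨j, fun i => hj i⟩) (by
        intro j
        obtain ⟨i, hi⟩ := hfA j
        exact ⟨i, hi⟩)
      rw [compl_compl] at h23
      have hmle : mimval (ccGrid p q) Aᶜ ≤ s := mimval_compl_le _ _
      apply harith
      calc p * q ≤ 3 * A.ncard := hA
        _ ≤ 3 * ((2 * mimval (ccGrid p q) Aᶜ) * (2 * mimval (ccGrid p q) Aᶜ)) := by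
            apply Nat.mul_le_mul_left
            exact h23
        _ ≤ 3 * ((2 * s) * (2 * s)) := by
            apply Nat.mul_le_mul_left
            apply Nat.mul_le_mul <;> omega
    · -- no full column at all: every column is mixed
      push_neg at hfA
      push_neg at hfB
      have hmix := mixed_bound A
      have heq : Finset.univ.filter (fun j : Fin q =>
          (∃ i, ((i, j) : Fin p × Fin q) ∈ A) ∧ (∃ i, ((i, j) : Fin p × Fin q) ∉ A))
          = Finset.univ := by
        apply Finset.filter_eq_self.mpr
        intro j _
        refine ⟨?_, ?_⟩
        · obtain ⟨i, hi⟩ := hfB j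
          exact ⟨i, hi⟩
        · obtain ⟨i, hi⟩ := hfA j
          exact ⟨i, hi⟩
      rw [heq, Finset.card_univ, Fintype.card_fin] at hmix
      omega

end MyAux
end CountAux


section ParentTree
namespace MyAux
open SimpleGraph

lemma tree_of_parent {β : Type} (G : SimpleGraph β) (root : β) (par : β → β) (ρ : β → ℕ)
    (hroot : par root = root)
    (h1 : ∀ v, v ≠ root → G.Adj v (par v) ∧ ρ (par v) < ρ v)
    (h2 : ∀ u v, G.Adj u v → (u ≠ root ∧ v = par u) ∨ (v ≠ root ∧ u = par v)) :
    G.Connected ∧ G.IsAcyclic := by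
  have hreach : ∀ m : ℕ, ∀ v, ρ v ≤ m → G.Reachable v root := by
    intro m
    induction m with
    | zero =>
      intro v hv
      by_cases h : v = root
      · rw [h]
      · exfalso
        have := (h1 v h).2
        omega
    | succ m ih =>
      intro v hv
      by_cases h : v = root
      · rw [h]
      · have h' := h1 v h
        exact h'.1.reachable.trans (ih (par v) (by omega))
  have hconn : G.Connected := by
    rw [connected_iff]
    refine ⟨fun u v => ?_, ⟨root⟩⟩
    exact (hreach (ρ u) u le_rfl).trans (hreach (ρ v) v le_rfl).symm
  have hrootiter : ∀ j : ℕ, par^[j] root = root := by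
    intro j
    induction j with
    | zero => rfl
    | succ j ih => rw [Function.iterate_succ_apply, hroot, ih]
  refine ⟨hconn, ?_⟩
  rw [isAcyclic_iff_forall_adj_isBridge]
  have key : ∀ a b : β, G.Adj a b → a ≠ root → b = par a →
      ¬ (G.deleteEdges {s(a,b)}).Reachable a b := by
    intro a b hadj haroot hbpar hr
    set S : Set β := {v | ∃ k : ℕ, par^[k] v = a} with hS
    have hclosed : ∀ u v : β, u ∈ S → (G.deleteEdges {s(a,b)}).Adj u v → v ∈ S := by
      intro u v hu hadj'
      rw [SimpleGraph.deleteEdges_adj] at hadj'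
      rcases h2 u v hadj'.1 with ⟨hu1, rfl⟩ | ⟨hv1, rfl⟩
      · obtain ⟨k, hk⟩ := hu
        cases k with
        | zero =>
          exfalso
          apply hadj'.2
          simp only [Function.iterate_zero_apply] at hk
          subst hk
          rw [Set.mem_singleton_iff, hbpar]
        | succ m =>
          rw [Function.iterate_succ_apply] at hk
          exact ⟨m, hk⟩
      · obtain ⟨k, hk⟩ := hu
        refine ⟨k + 1, ?_⟩
        rw [Function.iterate_succ_apply]
        exact hk
    have hwalk : ∀ (v w : β), (G.deleteEdges {s(a,b)}).Walk v w → v ∈ S → w ∈ S := by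
      intro v w W
      induction W with
      | nil => exact id
      | cons h q ih => exact fun hv => ih (hclosed _ _ hv h)
    obtain ⟨W⟩ := hr
    have hbS : b ∈ S := hwalk a b W ⟨0, rfl⟩
    have hrank : ∀ k : ℕ, ∀ v, par^[k] v = a → ρ a ≤ ρ v := by
      intro k
      induction k with
      | zero =>
        intro v hv
        simp only [Function.iterate_zero_apply] at hv
        rw [hv]
      | succ m ih =>
        intro v hv
        rw [Function.iterate_succ_apply] at hv
        by_cases h : v = root
        · exfalso
          apply haroot
          rw [← hv, h, hroot, hrootiter]
        · exact le_of_lt (lt_of_le_of_lt (ih _ hv) (h1 v h).2)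
    obtain ⟨k, hk⟩ := hbS
    rw [hbpar] at hk
    have hle : ρ a ≤ ρ (par a) := hrank k (par a) hk
    have hlt : ρ (par a) < ρ a := (h1 a haroot).2
    omega
  intro a b hadj
  rw [isBridge_iff]
  rcases h2 a b hadj with ⟨h3, h4⟩ | ⟨h3, h4⟩
  · exact key a b hadj h3 h4
  · intro hr
    rw [Sym2.eq_swap] at hr
    exact key b a hadj.symm h3 h4 hr.symm

end MyAux
end ParentTree


section Caterpillar
namespace MyAux
open SimpleGraph

/-- Caterpillar adjacency relation. -/
def catRel (n : ℕ) : (Fin n ⊕ Fin (n-2)) → (Fin n ⊕ Fin (n-2)) → Prop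
  | Sum.inl i, Sum.inr k => (k : ℕ) = min ((i : ℕ) - 1) (n - 3)
  | Sum.inr k, Sum.inr k' => (k' : ℕ) = (k : ℕ) + 1
  | _, _ => False

def catT (n : ℕ) : SimpleGraph (Fin n ⊕ Fin (n-2)) := SimpleGraph.fromRel (catRel n)

variable {n : ℕ}

lemma catT_adj_lr (hn : 5 ≤ n) (i : Fin n) (k : Fin (n-2)) :
    (catT n).Adj (Sum.inl i) (Sum.inr k) ↔ (k : ℕ) = min ((i : ℕ) - 1) (n - 3) := by
  show (Sum.inl i ≠ Sum.inr k ∧ (catRel n _ _ ∨ catRel n _ _)) ↔ _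
  constructor
  · rintro ⟨-, h | h⟩
    · exact h
    · exact absurd h (by simp [catRel])
  · intro h
    exact ⟨by simp, Or.inl h⟩

lemma catT_adj_rr (hn : 5 ≤ n) (k k' : Fin (n-2)) :
    (catT n).Adj (Sum.inr k) (Sum.inr k') ↔
      ((k' : ℕ) = (k : ℕ) + 1 ∨ (k : ℕ) = (k' : ℕ) + 1) := by
  show (Sum.inr k ≠ Sum.inr k' ∧ (catRel n _ _ ∨ catRel n _ _)) ↔ _
  constructor
  · rintro ⟨-, h | h⟩
    · exact Or.inl h
    · exact Or.inr h
  · intro h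
    refine ⟨?_, ?_⟩
    · intro hcon
      have : k = k' := by simpa using hcon
      subst this
      omega
    · rcases h with h | h
      · exact Or.inl h
      · exact Or.inr h

lemma catT_adj_ll (hn : 5 ≤ n) (i i' : Fin n) :
    ¬ (catT n).Adj (Sum.inl i) (Sum.inl i') := by
  rintro ⟨-, h | h⟩ <;> exact h

lemma catT_adj_rl (hn : 5 ≤ n) (k : Fin (n-2)) (i : Fin n) :
    (catT n).Adj (Sum.inr k) (Sum.inl i) ↔ (k : ℕ) = min ((i : ℕ) - 1) (n - 3) := by
  rw [SimpleGraph.adj_comm]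
  exact catT_adj_lr hn i k

/-- Parent map for the caterpillar. -/
def catPar (hn : 5 ≤ n) : (Fin n ⊕ Fin (n-2)) → (Fin n ⊕ Fin (n-2))
  | Sum.inl i => Sum.inr ⟨min ((i : ℕ) - 1) (n - 3), by omega⟩
  | Sum.inr k => Sum.inr ⟨(k : ℕ) - 1, by omega⟩

def catRho : (Fin n ⊕ Fin (n-2)) → ℕ
  | Sum.inl i => min ((i : ℕ) - 1) (n - 3) + 2
  | Sum.inr k => (k : ℕ) + 1

def catRoot (hn : 5 ≤ n) : Fin n ⊕ Fin (n-2) := Sum.inr ⟨0, by omega⟩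

lemma catT_tree (hn : 5 ≤ n) : (catT n).Connected ∧ (catT n).IsAcyclic := by
  apply tree_of_parent (catT n) (catRoot hn) (catPar hn) catRho
  · show Sum.inr _ = Sum.inr _
    congr 1
  · intro v hv
    cases v with
    | inl i =>
      constructor
      · rw [show catPar hn (Sum.inl i) = Sum.inr ⟨min ((i : ℕ) - 1) (n - 3), by omega⟩ from rfl,
          catT_adj_lr hn]
      · show min ((i : ℕ) - 1) (n - 3) + 1 < min ((i : ℕ) - 1) (n - 3) + 2
        omega
    | inr k =>
      have hk : (k : ℕ) ≠ 0 := by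
        intro hcon
        apply hv
        show Sum.inr k = Sum.inr _
        congr 1
        exact Fin.val_injective (by simpa using hcon)
      constructor
      · rw [show catPar hn (Sum.inr k) = Sum.inr ⟨(k : ℕ) - 1, by omega⟩ from rfl,
          catT_adj_rr hn]
        right
        simp
        omega
      · show ((k : ℕ) - 1) + 1 < (k : ℕ) + 1
        omega
  · intro u v hadj
    cases u with
    | inl i =>
      cases v with
      | inl i' => exact absurd hadj (catT_adj_ll hn i i')
      | inr k =>
        left
        rw [catT_adj_lr hn] at hadj
        refine ⟨by intro hcon; simp [catRoot] at hcon, ?_⟩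
        show Sum.inr k = Sum.inr _
        congr 1
        exact Fin.val_injective (by simpa using hadj)
    | inr k =>
      cases v with
      | inl i =>
        right
        rw [catT_adj_rl hn] at hadj
        refine ⟨by intro hcon; simp [catRoot] at hcon, ?_⟩
        show Sum.inr k = Sum.inr _
        congr 1
        exact Fin.val_injective (by simpa using hadj)
      | inr k' =>
        rw [catT_adj_rr hn] at hadj
        rcases hadj with h | h
        · right
          refine ⟨?_, ?_⟩
          · intro hcon
            have : (k' : ℕ) = 0 := by
              have : k' = (⟨0, by omega⟩ : Fin (n-2)) := by simpa [catRoot] using hcon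
              simpa using congrArg Fin.val this
            omega
          · show Sum.inr k = Sum.inr _
            congr 1
            apply Fin.val_injective
            simp
            omega
        · left
          refine ⟨?_, ?_⟩
          · intro hcon
            have : (k : ℕ) = 0 := by
              have : k = (⟨0, by omega⟩ : Fin (n-2)) := by simpa [catRoot] using hcon
              simpa using congrArg Fin.val this
            omega
          · show Sum.inr k' = Sum.inr _
            congr 1
            apply Fin.val_injective
            simp
            omega

end MyAux
end Caterpillar


section CatDegrees
namespace MyAux
open SimpleGraph

variable {n : ℕ}

lemma catT_deg_inl (hn : 5 ≤ n) (i : Fin n) :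
    ((catT n).neighborSet (Sum.inl i)).ncard = 1 := by
  have hset : (catT n).neighborSet (Sum.inl i)
      = {Sum.inr ⟨min ((i : ℕ) - 1) (n - 3), by omega⟩} := by
    ext w
    cases w with
    | inl i' =>
      simp only [mem_neighborSet, Set.mem_singleton_iff]
      constructor
      · intro h
        exact absurd h (catT_adj_ll hn i i')
      · intro h
        simp at h
    | inr k =>
      simp only [mem_neighborSet, Set.mem_singleton_iff]
      rw [catT_adj_lr hn]
      constructor
      · intro h
        congr 1
        exact Fin.val_injective (by simpa using h)
      · intro h
        have := congrArg (fun w => match w with | Sum.inr k => (k : ℕ) | Sum.inl _ => 0) h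
        simpa using this
  rw [hset, Set.ncard_singleton]

lemma catT_deg_inr (hn : 5 ≤ n) (k : Fin (n-2)) :
    ((catT n).neighborSet (Sum.inr k)).ncard = 3 := by
  have hk2 := k.isLt
  by_cases hk0 : (k : ℕ) = 0
  · have hset : (catT n).neighborSet (Sum.inr k)
        = {Sum.inr ⟨1, by omega⟩, Sum.inl ⟨0, by omega⟩, Sum.inl ⟨1, by omega⟩} := by
      ext w
      cases w with
      | inl i =>
        simp only [mem_neighborSet, Set.mem_insert_iff, Set.mem_singleton_iff]
        rw [catT_adj_rl hn]
        simp only [Sum.inl.injEq, Fin.ext_iff, reduceCtorEq, false_or]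
        omega
      | inr k' =>
        simp only [mem_neighborSet, Set.mem_insert_iff, Set.mem_singleton_iff]
        rw [catT_adj_rr hn]
        simp only [Sum.inr.injEq, Fin.ext_iff, reduceCtorEq, or_false]
        omega
    rw [hset, Set.ncard_eq_three]
    refine ⟨_, _, _, ?_, ?_, ?_, rfl⟩ <;> simp [Fin.ext_iff] <;> omega
  · by_cases hk3 : (k : ℕ) = n - 3
    · have hset : (catT n).neighborSet (Sum.inr k)
          = {Sum.inr ⟨n-4, by omega⟩, Sum.inl ⟨n-2, by omega⟩, Sum.inl ⟨n-1, by omega⟩} := by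
        ext w
        cases w with
        | inl i =>
          have hi := i.isLt
          simp only [mem_neighborSet, Set.mem_insert_iff, Set.mem_singleton_iff]
          rw [catT_adj_rl hn]
          simp only [Sum.inl.injEq, Fin.ext_iff, reduceCtorEq, false_or]
          omega
        | inr k' =>
          have hk' := k'.isLt
          simp only [mem_neighborSet, Set.mem_insert_iff, Set.mem_singleton_iff]
          rw [catT_adj_rr hn]
          simp only [Sum.inr.injEq, Fin.ext_iff, reduceCtorEq, or_false]
          omega
      rw [hset, Set.ncard_eq_three]
      refine ⟨_, _, _, ?_, ?_, ?_, rfl⟩ <;> simp [Fin.ext_iff] <;> omega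
    · have hset : (catT n).neighborSet (Sum.inr k)
          = {Sum.inr ⟨(k : ℕ) - 1, by omega⟩, Sum.inr ⟨(k : ℕ) + 1, by omega⟩,
              Sum.inl ⟨(k : ℕ) + 1, by omega⟩} := by
        ext w
        cases w with
        | inl i =>
          have hi := i.isLt
          simp only [mem_neighborSet, Set.mem_insert_iff, Set.mem_singleton_iff]
          rw [catT_adj_rl hn]
          simp only [Sum.inl.injEq, Fin.ext_iff, reduceCtorEq, false_or, or_false]
          omega
        | inr k' =>
          have hk' := k'.isLt
          simp only [mem_neighborSet, Set.mem_insert_iff, Set.mem_singleton_iff]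
          rw [catT_adj_rr hn]
          simp only [Sum.inr.injEq, Fin.ext_iff, reduceCtorEq, or_false, false_or]
          omega
      rw [hset, Set.ncard_eq_three]
      refine ⟨_, _, _, ?_, ?_, ?_, rfl⟩ <;> simp [Fin.ext_iff] <;> omega

lemma exists_branchdecomp (V : Type) [Fintype V] (hn : 5 ≤ Fintype.card V) :
    Nonempty (BranchDecomp V) := by
  classical
  set n := Fintype.card V with hncard
  have htree := catT_tree (n := n) hn
  refine ⟨⟨Fin n ⊕ Fin (n-2), inferInstance, catT n, htree.1, htree.2, ?_,
    Sum.inl ∘ (Fintype.equivFin V), ?_, ?_⟩⟩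
  · intro x
    cases x with
    | inl i => exact Or.inl (catT_deg_inl hn i)
    | inr k => exact Or.inr (catT_deg_inr hn k)
  · intro u v huv
    have : Sum.inl ((Fintype.equivFin V) u) = Sum.inl ((Fintype.equivFin V) v) := huv
    exact (Fintype.equivFin V).injective (by simpa using this)
  · intro x
    cases x with
    | inl i =>
      constructor
      · intro _
        exact ⟨(Fintype.equivFin V).symm i, by simp⟩
      · intro _
        exact catT_deg_inl hn i
    | inr k =>
      constructor
      · intro h
        rw [catT_deg_inr hn k] at h
        omega
      · rintro ⟨v, hv⟩
        exact absurd hv (by simp)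

end MyAux
end CatDegrees

/-- for `p, q ≥ 12`, the `(p × q)` column-clique grid has mim-width at
least `min(p/4, q/3)`. -/
theorem stmt8 (p q : ℕ) (hp : 12 ≤ p) (hq : 12 ≤ q) :
    min ((p : ℝ) / 4) ((q : ℝ) / 3) ≤ (mimw (ccGrid p q) : ℝ) := by
  classical
  have hcard : Fintype.card (Fin p × Fin q) = p * q := by simp
  have hpq : 144 ≤ p * q := Nat.mul_le_mul hp hq
  have hn : 5 ≤ Fintype.card (Fin p × Fin q) := by omega
  have hub : ∀ A : Set (Fin p × Fin q), mimval (ccGrid p q) A ≤ p * q := by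
    intro A
    apply csSup_le
    · refine ⟨0, ⟨Fin.elim0, Fin.elim0, ?_, ?_, ?_, ?_, ?_⟩⟩ <;>
        first
        | (intro i; exact i.elim0)
        | (intro i j; exact i.elim0)
    · rintro m ⟨a, b, ha, hb, -⟩
      have := Fintype.card_le_of_injective a ha
      rw [hcard] at this
      simpa using this
  obtain ⟨D0⟩ := MyAux.exists_branchdecomp (Fin p × Fin q) hn
  set S : Set ℕ := {w | ∃ D : BranchDecomp (Fin p × Fin q),
    ∀ x y, D.T.Adj x y → mimval (ccGrid p q) (D.cut x y) ≤ w} with hS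
  have hne : S.Nonempty := ⟨p * q, D0, fun x y _ => hub _⟩
  have hmimw : mimw (ccGrid p q) = sInf S := rfl
  obtain ⟨D, hD⟩ : sInf S ∈ S := Nat.sInf_mem hne
  obtain ⟨x, y, hadj, h1, h2⟩ := MyAux.exists_balanced D hn
  set A : Set (Fin p × Fin q) := D.cut x y with hA
  have hcompl : D.cut y x = Aᶜ := MyAux.cut_compl D hadj
  rw [hcompl, hcard] at h2
  rw [hcard] at h1
  have hmin := MyAux.partB hp hq A h1 h2
  have hle : mimval (ccGrid p q) A ≤ sInf S := hD x y hadj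
  calc min ((p : ℝ) / 4) ((q : ℝ) / 3) ≤ (mimval (ccGrid p q) A : ℝ) := hmin
    _ ≤ ((sInf S : ℕ) : ℝ) := by exact_mod_cast hle
    _ = (mimw (ccGrid p q) : ℝ) := by rw [hmimw]
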